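/- The topological complexity of a space X equals 1 if and only if X is contractible. -/

import Mathlib

open unitInterval

/-- A continuous local motion-planning section over `U ⊆ X × X`. -/
def IsMotionSection {X : Type*} [TopologicalSpace X] (U : Set (X × X)) : Prop :=
  ∃ s : C(U, C(I, X)), ∀ p : U, s p 0 = (p : X × X).1 ∧ s p 1 = (p : X × X).2

/-- `X × X` can be covered by `k` open sets, each admitting a continuous local section. -/
def HasTCCover (X : Type*) [TopologicalSpace X] (k : ℕ) : Prop :=
  ∃ U : Fin k → Set (X × X), (∀ i, IsOpen (U i)) ∧ (⋃ i, U i) = Set.univ ∧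
    ∀ i, IsMotionSection (U i)

/-- Farber's topological complexity (unreduced; `⊤` if no finite cover works). -/
noncomputable def topologicalComplexity (X : Type*) [TopologicalSpace X] : ℕ∞ :=
  sInf ((↑) '' {k : ℕ | 1 ≤ k ∧ HasTCCover X k})

theorem hasTCCover_one_of_contractible {X : Type*} [TopologicalSpace X]
    (h : ContractibleSpace X) : HasTCCover X 1 := by
  obtain ⟨y₀, ⟨H⟩⟩ := (contractible_iff_id_nullhomotopic X).mp h
  -- build the global section via a "go to y₀ then come back" path
  have hproj : Continuous (Set.projIcc (0:ℝ) 1 zero_le_one) := continuous_projIcc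
  set g₁ : (X × X) × I → X := fun p =>
    H (Set.projIcc (0:ℝ) 1 zero_le_one (2 * (p.2 : ℝ)), p.1.1) with hg₁
  set g₂ : (X × X) × I → X := fun p =>
    H (Set.projIcc (0:ℝ) 1 zero_le_one (2 - 2 * (p.2 : ℝ)), p.1.2) with hg₂
  have hc₁ : Continuous g₁ := by
    apply H.continuous.comp
    exact (hproj.comp (continuous_const.mul
      (continuous_subtype_val.comp continuous_snd))).prodMk
      (continuous_fst.comp continuous_fst)
  have hc₂ : Continuous g₂ := by
    apply H.continuous.comp
    exact (hproj.comp (continuous_const.sub (continuous_const.mul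
      (continuous_subtype_val.comp continuous_snd)))).prodMk
      (continuous_snd.comp continuous_fst)
  have hFc : Continuous (fun p : (X × X) × I =>
      if ((p.2 : ℝ)) ≤ (1:ℝ)/2 then g₁ p else g₂ p) := by
    refine Continuous.if_le hc₁ hc₂ (continuous_subtype_val.comp continuous_snd)
      continuous_const ?_
    intro p hp
    have h1 : (2 : ℝ) * (p.2 : ℝ) = 1 := by rw [hp]; ring
    have h2 : (2 : ℝ) - 2 * (p.2 : ℝ) = 1 := by rw [hp]; ring
    simp only [hg₁, hg₂]
    rw [h2, h1]
    have e : Set.projIcc (0:ℝ) 1 zero_le_one 1 = 1 := by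
      ext; simp [Set.projIcc]
    rw [e, H.apply_one, H.apply_one]
    rfl
  set F : C((X × X) × I, X) := ⟨_, hFc⟩ with hF
  refine ⟨fun _ => Set.univ, fun _ => isOpen_univ, Set.iUnion_const _, fun _ => ?_⟩
  refine ⟨F.curry.comp ⟨Subtype.val, continuous_subtype_val⟩, fun p => ?_⟩
  constructor
  · show F ((p : X × X), 0) = _
    have : ((0 : I) : ℝ) ≤ (1:ℝ)/2 := by norm_num
    simp only [hF, ContinuousMap.coe_mk, this, if_pos, hg₁]
    norm_num
  · show F ((p : X × X), 1) = _
    have : ¬ ((1 : I) : ℝ) ≤ (1:ℝ)/2 := by norm_num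
    simp only [hF, ContinuousMap.coe_mk, this, if_neg, hg₂]
    norm_num

/-- `TC(X) = 1` iff `X` is contractible. -/
theorem tc_eq_one_iff_contractible {X : Type*} [TopologicalSpace X] [Nonempty X] :
    topologicalComplexity X = 1 ↔ ContractibleSpace X := by
  constructor
  · intro h
    -- extract a cover with one set
    have hlt : sInf ((↑) '' {k : ℕ | 1 ≤ k ∧ HasTCCover X k}) < (2 : ℕ∞) := by
      rw [show sInf ((↑) '' {k : ℕ | 1 ≤ k ∧ HasTCCover X k}) = topologicalComplexity X from rfl,
        h]
      norm_num
    obtain ⟨a, ⟨k, ⟨hk1, hkcov⟩, rfl⟩, hk2⟩ := sInf_lt_iff.mp hlt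
    have hk2' : k < 2 := by exact_mod_cast hk2
    have hk : k = 1 := by omega
    subst hk
    obtain ⟨U, _, hcov, hsec⟩ := hkcov
    have hU0 : U 0 = Set.univ := by
      rw [← hcov]
      apply Set.Subset.antisymm (Set.subset_iUnion U 0)
      intro p hp
      obtain ⟨i, hi⟩ := Set.mem_iUnion.mp hp
      rwa [Subsingleton.elim i 0] at hi
    obtain ⟨s, hs⟩ := hsec 0
    obtain ⟨x₀⟩ := (inferInstance : Nonempty X)
    have hmem : ∀ x : X, (x, x₀) ∈ U 0 := by intro x; rw [hU0]; trivial
    have hgc : Continuous fun x : X => s ⟨(x, x₀), hmem x⟩ :=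
      s.continuous.comp (Continuous.subtype_mk (continuous_id.prodMk continuous_const) _)
    have HF : Continuous fun q : I × X => s ⟨(q.2, x₀), hmem q.2⟩ q.1 := by
      have : Continuous fun q : I × X =>
          ((fun x : X => s ⟨(x, x₀), hmem x⟩) q.2, q.1) :=
        (hgc.comp continuous_snd).prodMk continuous_fst
      exact continuous_eval.comp this
    have Hom : (ContinuousMap.id X).Homotopy (ContinuousMap.const X x₀) :=
      { toFun := fun q : I × X => s ⟨(q.2, x₀), hmem q.2⟩ q.1
        continuous_toFun := HF
        map_zero_left := fun x => (hs ⟨(x, x₀), hmem x⟩).1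
        map_one_left := fun x => (hs ⟨(x, x₀), hmem x⟩).2 }
    exact (contractible_iff_id_nullhomotopic X).mpr ⟨x₀, ⟨Hom⟩⟩
  · intro h
    have hcov := hasTCCover_one_of_contractible h
    apply le_antisymm
    · exact sInf_le ⟨1, ⟨le_refl 1, hcov⟩, rfl⟩
    · apply le_sInf
      rintro a ⟨k, ⟨hk, _⟩, rfl⟩
      exact_mod_cast hk
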